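/- arXiv:math/0301202 — 2 statements merged into one kernel-verified Lean document; each statement's English description precedes it below -/
import Mathlib

section
/- Let R be a commutative ℚ-algebra and B(t) ∈ R[[t]] a power series with zero constant term. Define polynomials p_k(X) ∈ R[X] by Σ_{k≥0} p_k(X) t^k/k! = exp(X·B(t)) in (R[X])[[t]], and let W_B ∈ tR[[t]] be the unique power series with W_B(t·exp(B(t))) = t. Set q₀ = 1 and, for k ≥ 1, let q_k(X) ∈ R[X] be the unique polynomial with (X − k)·q_k(X) = X·p_k(X − k) (such q_k exists since X − k divides X·p_k(X − k), and is unique since X − k is monic, hence a non-zerodivisor). Then in (R[X])[[t]]: Σ_{k≥0} q_k(X) t^k/k! = exp(X·B(W_B(t))); in the paper's notation, Σ_{k≥0} (x·p_k(x−k)/(x−k)) t^k/k! = exp(x·B(W_B(t))). -/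
/-- Substitution (composition) of formal power series: `substPS a f = f(a)`, whose
`n`-th coefficient is `Σ_k (coeff k f) · (coeff n aᵏ)`.  For `a` with zero constant
term this finite sum realises the usual composition of formal power series. -/
noncomputable def substPS {R : Type*} [CommRing R] (a f : PowerSeries R) : PowerSeries R :=
  PowerSeries.mk fun n => ∑ᶠ (k : ℕ), PowerSeries.coeff (R := R) k f * PowerSeries.coeff (R := R) n (a ^ k)

namespace StmtAux

open PowerSeries Finset

variable {A : Type*} [CommRing A]

lemma coeff_pow_eq_zero {a : PowerSeries A} (ha : constantCoeff a = 0)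
    {n k : ℕ} (h : n < k) : coeff n (a ^ k) = 0 := by
  obtain ⟨c, rfl⟩ := PowerSeries.X_dvd_iff.mpr ha
  rw [mul_pow]
  exact (PowerSeries.X_pow_dvd_iff.mp (dvd_mul_right _ _)) n h

lemma coeff_substPS {a : PowerSeries A} (ha : constantCoeff a = 0) (f : PowerSeries A)
    (n : ℕ) :
    coeff n (substPS a f) = ∑ k ∈ range (n + 1), coeff k f * coeff n (a ^ k) := by
  rw [substPS, coeff_mk]
  apply finsum_eq_sum_of_support_subset
  intro k hk
  simp only [Function.mem_support] at hk
  simp only [coe_range, Set.mem_Iio, Nat.lt_succ_iff]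
  by_contra h
  exact hk (by rw [coeff_pow_eq_zero ha (by omega), mul_zero])

lemma substPS_add {a : PowerSeries A} (ha : constantCoeff a = 0) (f g : PowerSeries A) :
    substPS a (f + g) = substPS a f + substPS a g := by
  ext n
  rw [map_add, coeff_substPS ha, coeff_substPS ha, coeff_substPS ha, ← Finset.sum_add_distrib]
  exact Finset.sum_congr rfl fun k _ => by rw [map_add, add_mul]

lemma substPS_coe {a : PowerSeries A} (ha : constantCoeff a = 0) (P : Polynomial A) :
    substPS a (P : PowerSeries A) = Polynomial.eval₂ (C (R := A)) a P := by
  induction P using Polynomial.induction_on' with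
  | add p q hp hq => rw [Polynomial.coe_add, substPS_add ha, hp, hq, Polynomial.eval₂_add]
  | monomial k r =>
      ext n
      rw [Polynomial.eval₂_monomial, coeff_substPS ha, coeff_C_mul]
      calc ∑ j ∈ range (n + 1), coeff j ((Polynomial.monomial k r : Polynomial A) : PowerSeries A) * coeff n (a ^ j)
          = ∑ j ∈ range (n + 1), (if j = k then r * coeff n (a ^ k) else 0) := by
            apply Finset.sum_congr rfl; intro j _
            rw [Polynomial.coe_monomial, PowerSeries.coeff_monomial]
            by_cases h : j = k
            · subst h; simp
            · simp [h]
        _ = r * coeff n (a ^ k) := by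
            rw [Finset.sum_ite_eq' (range (n + 1)) k]
            split
            · rfl
            · next h =>
                rw [coeff_pow_eq_zero ha (by simp only [mem_range] at h; omega), mul_zero]

lemma coeff_substPS_trunc {a : PowerSeries A} (ha : constantCoeff a = 0)
    (f : PowerSeries A) {n N : ℕ} (h : n < N) :
    coeff n (substPS a f) = coeff n (substPS a ((f.trunc N : Polynomial A) : PowerSeries A)) := by
  rw [coeff_substPS ha, coeff_substPS ha]
  apply Finset.sum_congr rfl
  intro k hk
  rw [PowerSeries.coeff_coe_trunc_of_lt (by simp only [mem_range] at hk; omega)]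

lemma coeff_mul_congr {u v M : PowerSeries A} {n : ℕ}
    (h : ∀ j, j ≤ n → coeff j u = coeff j v) :
    coeff n (u * M) = coeff n (v * M) := by
  rw [coeff_mul, coeff_mul]
  apply Finset.sum_congr rfl
  rintro ⟨i, j⟩ hij
  rw [Finset.HasAntidiagonal.mem_antidiagonal] at hij
  rw [h i (by omega)]

lemma substPS_mul {a : PowerSeries A} (ha : constantCoeff a = 0) (f g : PowerSeries A) :
    substPS a (f * g) = substPS a f * substPS a g := by
  ext n
  set N := n + 1 with hN
  have e1 : coeff n (substPS a (f * g))
      = coeff n (Polynomial.eval₂ (C (R := A)) a ((f * g).trunc N)) := by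
    rw [coeff_substPS_trunc ha (f * g) (show n < N by omega), substPS_coe ha]
  have e2 : coeff n (substPS a f * substPS a g)
      = coeff n (Polynomial.eval₂ (C (R := A)) a (f.trunc N * g.trunc N)) := by
    rw [coeff_mul_congr (fun j hj => coeff_substPS_trunc ha f (show j < N by omega)),
      mul_comm, coeff_mul_congr (fun j hj => coeff_substPS_trunc ha g (show j < N by omega)),
      mul_comm, substPS_coe ha, substPS_coe ha, ← Polynomial.eval₂_mul]
  rw [e1, e2, ← substPS_coe ha, ← substPS_coe ha,
    coeff_substPS_trunc ha (((f * g).trunc N : Polynomial A) : PowerSeries A) (show n < N by omega),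
    coeff_substPS_trunc ha ((f.trunc N * g.trunc N : Polynomial A) : PowerSeries A) (show n < N by omega),
    PowerSeries.trunc_trunc, Polynomial.coe_mul, PowerSeries.trunc_mul_trunc, PowerSeries.trunc_trunc_mul]

lemma substPS_one {a : PowerSeries A} (ha : constantCoeff a = 0) :
    substPS a 1 = 1 := by
  have := substPS_coe ha 1
  simpa using this

lemma substPS_pow {a : PowerSeries A} (ha : constantCoeff a = 0) (f : PowerSeries A) (k : ℕ) :
    substPS a (f ^ k) = (substPS a f) ^ k := by
  induction k with
  | zero => simpa using substPS_one ha
  | succ m ih => rw [pow_succ, pow_succ, substPS_mul ha, ih]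

lemma substPS_C {a : PowerSeries A} (ha : constantCoeff a = 0) (r : A) :
    substPS a (C r) = C r := by
  have := substPS_coe ha (Polynomial.C r)
  simpa using this

lemma substPS_C_mul {a : PowerSeries A} (ha : constantCoeff a = 0) (r : A) (f : PowerSeries A) :
    substPS a (C r * f) = C r * substPS a f := by
  rw [substPS_mul ha, substPS_C ha]

lemma substPS_X {a : PowerSeries A} (ha : constantCoeff a = 0) :
    substPS a X = a := by
  ext n
  rw [coeff_substPS ha]
  calc ∑ k ∈ range (n + 1), coeff k (X : PowerSeries A) * coeff n (a ^ k)
      = ∑ k ∈ range (n + 1), (if k = 1 then coeff n a else 0) := by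
        apply Finset.sum_congr rfl; intro k _
        rw [PowerSeries.coeff_X]
        by_cases h : k = 1
        · subst h; simp
        · simp [h]
    _ = _ := by
        rw [Finset.sum_ite_eq' (range (n + 1)) 1]
        split
        · rfl
        · next h =>
            simp only [mem_range] at h
            have hn : n = 0 := by omega
            subst hn
            simp [ha]

lemma substPS_X_left (f : PowerSeries A) : substPS X f = f := by
  ext n
  rw [coeff_substPS (by simp) f]
  calc ∑ k ∈ range (n + 1), coeff k f * coeff n ((X : PowerSeries A) ^ k)
      = ∑ k ∈ range (n + 1), (if k = n then coeff n f else 0) := by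
        apply Finset.sum_congr rfl; intro k _
        rw [PowerSeries.coeff_X_pow]
        by_cases h : k = n
        · subst h; simp
        · simp [h, Ne.symm]
    _ = coeff n f := by rw [Finset.sum_ite_eq' (range (n + 1)) n]; simp

lemma constantCoeff_substPS {a : PowerSeries A} (ha : constantCoeff a = 0)
    (f : PowerSeries A) : constantCoeff (substPS a f) = constantCoeff f := by
  rw [← coeff_zero_eq_constantCoeff_apply, ← coeff_zero_eq_constantCoeff_apply,
    coeff_substPS ha]
  simp

lemma coeff_substPS_mul {a : PowerSeries A} (ha : constantCoeff a = 0)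
    (f M : PowerSeries A) (n : ℕ) :
    coeff n (substPS a f * M)
      = ∑ k ∈ range (n + 1), coeff k f * coeff n (a ^ k * M) := by
  rw [coeff_mul_congr (fun j hj => coeff_substPS_trunc ha f (show j < n + 1 by omega)),
    substPS_coe ha, PowerSeries.eval₂_trunc_eq_sum_range, Finset.sum_mul, map_sum]
  apply Finset.sum_congr rfl
  intro k _
  rw [mul_assoc, coeff_C_mul]

lemma substPS_assoc {a b : PowerSeries A} (ha : constantCoeff a = 0)
    (hb : constantCoeff b = 0) (f : PowerSeries A) :
    substPS a (substPS b f) = substPS (substPS a b) f := by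
  have hab : constantCoeff (substPS a b) = 0 := by
    rw [constantCoeff_substPS ha, hb]
  ext n
  rw [coeff_substPS ha, coeff_substPS hab]
  have e1 : ∀ k, coeff k (substPS b f) = ∑ j ∈ range (n + 1), coeff j f * coeff k (b ^ j)
      → True := fun _ _ => trivial
  clear e1
  calc ∑ k ∈ range (n + 1), coeff k (substPS b f) * coeff n (a ^ k)
      = ∑ k ∈ range (n + 1), ∑ j ∈ range (n + 1), coeff j f * coeff k (b ^ j) * coeff n (a ^ k) := by
        apply Finset.sum_congr rfl
        intro k hk
        rw [coeff_substPS hb, Finset.sum_mul]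
        rcases Nat.lt_or_ge k n with h | h
        · rw [← Finset.sum_subset (Finset.range_subset_range.mpr (show k + 1 ≤ n + 1 by omega))]
          intro j hj hj'
          simp only [mem_range] at hj hj'
          rw [coeff_pow_eq_zero hb (show k < j by omega), mul_zero, zero_mul]
        · have : k = n := by simp only [mem_range] at hk; omega
          subst this; rfl
    _ = ∑ j ∈ range (n + 1), coeff j f * coeff n ((substPS a b) ^ j) := by
        rw [Finset.sum_comm]
        apply Finset.sum_congr rfl
        intro j _
        rw [← substPS_pow ha, coeff_substPS ha, Finset.mul_sum]
        apply Finset.sum_congr rfl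
        intro k _
        ring

lemma substPS_rescale {a : PowerSeries A} (ha : constantCoeff a = 0) (c : A)
    (f : PowerSeries A) :
    substPS a (PowerSeries.rescale c f) = substPS (C c * a) f := by
  have hca : constantCoeff (C c * a) = 0 := by simp [ha]
  ext n
  rw [coeff_substPS ha, coeff_substPS hca]
  apply Finset.sum_congr rfl
  intro k _
  rw [PowerSeries.coeff_rescale, mul_pow, ← map_pow, coeff_C_mul]
  ring

lemma map_substPS {A' : Type*} [CommRing A'] (φ : A →+* A') {a : PowerSeries A}
    (ha : constantCoeff a = 0) (f : PowerSeries A) :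
    PowerSeries.map φ (substPS a f) = substPS (PowerSeries.map φ a) (PowerSeries.map φ f) := by
  have ha' : constantCoeff (PowerSeries.map φ a) = 0 := by
    rw [← coeff_zero_eq_constantCoeff_apply, PowerSeries.coeff_map,
      coeff_zero_eq_constantCoeff_apply, ha, map_zero]
  ext n
  rw [PowerSeries.coeff_map, coeff_substPS ha, coeff_substPS ha', map_sum]
  apply Finset.sum_congr rfl
  intro k _
  rw [map_mul, PowerSeries.coeff_map, ← map_pow, PowerSeries.coeff_map]

section Exp

variable [Algebra ℚ A]

/-- partial sums of the exponential substituted -/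
noncomputable def expPart (a : PowerSeries A) (m : ℕ) : PowerSeries A :=
  Polynomial.eval₂ (C (R := A)) a ((PowerSeries.exp A).trunc m)

lemma coeff_substPS_exp_eq_expPart {a : PowerSeries A} (ha : constantCoeff a = 0)
    {j m : ℕ} (h : j < m) :
    coeff j (substPS a (PowerSeries.exp A)) = coeff j (expPart a m) := by
  rw [coeff_substPS_trunc ha _ h, substPS_coe ha, expPart]

lemma expPart_eq_sum (a : PowerSeries A) (m : ℕ) :
    expPart a m = ∑ k ∈ range m, C (algebraMap ℚ A (1 / k.factorial)) * a ^ k := by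
  rw [expPart, PowerSeries.eval₂_trunc_eq_sum_range]
  exact Finset.sum_congr rfl fun k _ => by rw [PowerSeries.coeff_exp]

omit [Algebra ℚ A] in
lemma derivative_mul'' (f g : PowerSeries A) :
    PowerSeries.derivative A (f * g)
      = f * PowerSeries.derivative A g + g * PowerSeries.derivative A f := by
  rw [Derivation.leibniz]
  simp only [smul_eq_mul]

omit [Algebra ℚ A] in
lemma derivative_C_mul (r : A) (f : PowerSeries A) :
    PowerSeries.derivative A (C r * f) = C r * PowerSeries.derivative A f := by
  rw [Derivation.leibniz]
  simp only [PowerSeries.derivative_C, smul_zero, mul_zero, add_zero, smul_eq_mul]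

lemma derivative_substPS_exp {a : PowerSeries A} (ha : constantCoeff a = 0) :
    PowerSeries.derivative A (substPS a (PowerSeries.exp A))
      = (PowerSeries.derivative A a) * substPS a (PowerSeries.exp A) := by
  ext n
  have e1 : coeff n (PowerSeries.derivative A (substPS a (PowerSeries.exp A)))
      = coeff n (PowerSeries.derivative A (expPart a (n + 2))) := by
    rw [PowerSeries.coeff_derivative, PowerSeries.coeff_derivative,
      coeff_substPS_exp_eq_expPart ha (show n + 1 < n + 2 by omega)]
  have e2 : coeff n ((PowerSeries.derivative A a) * substPS a (PowerSeries.exp A))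
      = coeff n (expPart a (n + 1) * PowerSeries.derivative A a) := by
    rw [mul_comm, coeff_mul_congr (fun j hj =>
      coeff_substPS_exp_eq_expPart ha (show j < n + 2 by omega)), mul_comm,
      mul_comm ((PowerSeries.derivative A) a), coeff_mul_congr (fun j hj => ?_)]
    rw [← coeff_substPS_exp_eq_expPart ha (show j < n + 2 by omega),
      coeff_substPS_exp_eq_expPart ha (show j < n + 1 by omega)]
  rw [e1, e2]
  congr 1
  rw [expPart_eq_sum, expPart_eq_sum, map_sum, Finset.sum_range_succ']
  have hz : (PowerSeries.derivative A) (C (algebraMap ℚ A (1 / (Nat.factorial 0))) * a ^ 0) = 0 := by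
    simp
  rw [hz, add_zero, Finset.sum_mul]
  apply Finset.sum_congr rfl
  intro k _
  set d := (PowerSeries.derivative A) a with hdd
  have hpow : (PowerSeries.derivative A) (a ^ (k + 1)) = ((k + 1 : ℕ) : PowerSeries A) * (a ^ k * d) := by
    rw [Derivation.leibniz_pow]
    simp only [Nat.add_sub_cancel, smul_eq_mul, nsmul_eq_mul]
    rw [hdd]
  have hfact : C (algebraMap ℚ A (1 / (Nat.factorial (k + 1)))) * ((k + 1 : ℕ) : PowerSeries A)
      = C (algebraMap ℚ A (1 / (Nat.factorial k))) := by
    rw [← map_natCast (C (R := A)) (k + 1), ← map_mul]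
    congr 1
    rw [← map_natCast (algebraMap ℚ A) (k + 1), ← map_mul]
    congr 1
    rw [Nat.factorial_succ]
    push_cast
    have h0 : ((k : ℚ) + 1) ≠ 0 := by positivity
    field_simp
  rw [Derivation.leibniz, PowerSeries.derivative_C, smul_zero, add_zero, smul_eq_mul, hpow,
    ← mul_assoc, hfact]
  ring

end Exp

section Main

variable {R : Type*} [CommRing R] [Algebra ℚ R]

/-- `ψ B c = exp(c·B̃(t))` in `(R[X])[[t]]`. -/
noncomputable def psi (B : PowerSeries R) (c : Polynomial R) : PowerSeries (Polynomial R) :=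
  substPS (C c * PowerSeries.map (Polynomial.C) B) (PowerSeries.exp (Polynomial R))

variable {B : PowerSeries R} (hB0 : PowerSeries.constantCoeff B = 0)

include hB0

lemma constantCoeff_TB : constantCoeff (PowerSeries.map (Polynomial.C) B) = 0 := by
  rw [← coeff_zero_eq_constantCoeff_apply, PowerSeries.coeff_map,
    coeff_zero_eq_constantCoeff_apply, hB0, map_zero]

lemma constantCoeff_cTB (c : Polynomial R) :
    constantCoeff (C c * PowerSeries.map (Polynomial.C) B) = 0 := by
  rw [map_mul, constantCoeff_C, constantCoeff_TB hB0, mul_zero]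

lemma psi_eq_rescale (c : Polynomial R) :
    psi B c = substPS (PowerSeries.map (Polynomial.C) B)
      (PowerSeries.rescale c (PowerSeries.exp (Polynomial R))) :=
  (substPS_rescale (constantCoeff_TB hB0) c _).symm

lemma psi_mul (c d : Polynomial R) : psi B c * psi B d = psi B (c + d) := by
  rw [psi_eq_rescale hB0, psi_eq_rescale hB0, psi_eq_rescale hB0,
    ← substPS_mul (constantCoeff_TB hB0), PowerSeries.exp_mul_exp_eq_exp_add]

lemma psi_zero : psi B (0 : Polynomial R) = 1 := by
  rw [psi_eq_rescale hB0, PowerSeries.rescale_zero]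
  simp only [RingHom.coe_comp, Function.comp_apply, PowerSeries.constantCoeff_exp, map_one]
  exact substPS_one (constantCoeff_TB hB0)

lemma psi_pow (c : Polynomial R) (m : ℕ) :
    psi B c ^ m = psi B ((m : Polynomial R) * c) := by
  induction m with
  | zero => simp [psi_zero hB0]
  | succ j ih =>
      rw [pow_succ, ih, psi_mul hB0]
      push_cast
      ring_nf

lemma psi_deriv (c : Polynomial R) :
    PowerSeries.derivative (Polynomial R) (psi B c)
      = C c *
        (PowerSeries.derivative (Polynomial R) (PowerSeries.map (Polynomial.C) B) * psi B c) := by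
  rw [psi, derivative_substPS_exp (constantCoeff_cTB hB0 c), derivative_C_mul, ← psi, mul_assoc]

lemma psi_one_eq : psi B (1 : Polynomial R)
    = substPS (PowerSeries.map (Polynomial.C) B) (PowerSeries.exp (Polynomial R)) := by
  rw [psi, map_one, one_mul]

lemma constantCoeff_psi (c : Polynomial R) :
    constantCoeff (psi B c) = 1 := by
  rw [psi, constantCoeff_substPS (constantCoeff_cTB hB0 c), PowerSeries.constantCoeff_exp]

lemma psi_pow' (m : ℕ) : psi B 1 ^ m = psi B ((m : Polynomial R)) := by
  rw [psi_pow hB0, mul_one]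

omit hB0 in
lemma constantCoeff_F :
    constantCoeff (X * psi B (1 : Polynomial R)) = 0 := by
  rw [map_mul, constantCoeff_X, zero_mul]

lemma deriv_F : PowerSeries.derivative (Polynomial R) (X * psi B 1)
    = psi B 1 + X * (PowerSeries.derivative (Polynomial R)
        (PowerSeries.map (Polynomial.C) B) * psi B 1) := by
  rw [derivative_mul'', psi_deriv hB0, PowerSeries.derivative_X, map_one, one_mul, mul_one]
  ring

lemma coeff_term (n k : ℕ) (hk : k ≤ n) :
    coeff n ((X * psi B 1) ^ k *
      (PowerSeries.derivative (Polynomial R) (X * psi B 1) *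
        psi B (-((n : Polynomial R) + 1))))
    = if k = n then 1 else 0 := by
  set DB := PowerSeries.derivative (Polynomial R) (PowerSeries.map (Polynomial.C) B) with hDB
  set e : Polynomial R := -((n : Polynomial R) + 1) with he
  have h1 : ∀ c d : Polynomial R, psi B c * ((psi B 1 + X * (DB * psi B 1)) * psi B d)
      = psi B (c + 1 + d) + X * (DB * psi B (c + 1 + d)) := by
    intro c d
    have : psi B c * ((psi B 1 + X * (DB * psi B 1)) * psi B d)
        = (psi B c * psi B 1 * psi B d) + X * (DB * (psi B c * psi B 1 * psi B d)) := by ring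
    rw [this, psi_mul hB0, psi_mul hB0]
  have expand : (X * psi B 1) ^ k *
      (PowerSeries.derivative (Polynomial R) (X * psi B 1) * psi B e)
      = X ^ k * (psi B ((k : Polynomial R) + 1 + e)
          + X * (DB * psi B ((k : Polynomial R) + 1 + e))) := by
    rw [deriv_F hB0, mul_pow, psi_pow' hB0, mul_assoc, h1]
  rw [expand]
  rcases eq_or_lt_of_le hk with heq | hlt
  · subst heq
    have h0 : ((k : Polynomial R) + 1 + e) = 0 := by rw [he]; ring
    rw [h0, psi_zero hB0, if_pos rfl]
    have h5 := PowerSeries.coeff_X_pow_mul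
      ((1 : PowerSeries (Polynomial R)) + X * (DB * 1)) k 0
    rw [zero_add] at h5
    rw [h5]
    simp
  · rw [if_neg (by omega)]
    obtain ⟨m', hm'⟩ : ∃ m', n = k + (m' + 1) := ⟨n - k - 1, by omega⟩
    have harg : ((k : Polynomial R) + 1 + e) = -(((m' + 1 : ℕ)) : Polynomial R) := by
      rw [he, hm']
      push_cast
      ring
    rw [harg]
    set z1 := coeff (m' + 1)
      (psi B (-(((m' + 1 : ℕ)) : Polynomial R))) with hz1
    set z2 := coeff m'
      (DB * psi B (-(((m' + 1 : ℕ)) : Polynomial R))) with hz2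
    have hidx : n = (m' + 1) + k := by omega
    rw [hidx, PowerSeries.coeff_X_pow_mul, map_add, PowerSeries.coeff_succ_X_mul,
      ← hz1, ← hz2]
    have hder : coeff m'
        (PowerSeries.derivative (Polynomial R)
          (psi B (-(((m' + 1 : ℕ)) : Polynomial R))))
        = z1 * ((m' + 1 : ℕ) : Polynomial R) := by
      rw [PowerSeries.coeff_derivative, ← hz1]
      push_cast
      ring
    have hder2 : coeff m'
        (PowerSeries.derivative (Polynomial R)
          (psi B (-(((m' + 1 : ℕ)) : Polynomial R))))
        = -(((m' + 1 : ℕ)) : Polynomial R) * z2 := by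
      rw [psi_deriv hB0, ← hDB, coeff_C_mul, ← hz2]
    have h3 : ((m' + 1 : ℕ) : Polynomial R) * (z1 + z2) = 0 := by
      linear_combination hder.symm.trans hder2
    have h4 : (((m' + 1 : ℕ)) : ℚ) • (z1 + z2) = 0 := by
      rw [Nat.cast_smul_eq_nsmul, nsmul_eq_mul, h3]
    have hm0 : (((m' + 1 : ℕ)) : ℚ) ≠ 0 := by positivity
    calc z1 + z2 = ((((m' + 1 : ℕ)) : ℚ)⁻¹ * (((m' + 1 : ℕ)) : ℚ)) • (z1 + z2) := by
          rw [inv_mul_cancel₀ hm0, one_smul]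
      _ = (((m' + 1 : ℕ)) : ℚ)⁻¹ • (((((m' + 1 : ℕ)) : ℚ)) • (z1 + z2)) := by
          rw [mul_smul]
      _ = 0 := by rw [h4, smul_zero]

lemma expandF (c d : Polynomial R) :
    psi B c * (PowerSeries.derivative (Polynomial R) (X * psi B 1) * psi B d)
      = psi B (c + 1 + d)
        + X * (PowerSeries.derivative (Polynomial R) (PowerSeries.map (Polynomial.C) B)
            * psi B (c + 1 + d)) := by
  set DB := PowerSeries.derivative (Polynomial R) (PowerSeries.map (Polynomial.C) B) with hDB
  rw [deriv_F hB0]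
  have : psi B c * ((psi B 1 + X * (DB * psi B 1)) * psi B d)
      = (psi B c * psi B 1 * psi B d) + X * (DB * (psi B c * psi B 1 * psi B d)) := by ring
  rw [this, psi_mul hB0, psi_mul hB0]

omit hB0 in
lemma psi_def (c : Polynomial R) :
    psi B c = substPS (C c * PowerSeries.map (Polynomial.C) B)
      (PowerSeries.exp (Polynomial R)) := rfl

lemma keyL (n : ℕ) (P : PowerSeries (Polynomial R)) :
    coeff n (substPS (X * psi B 1) P *
      (PowerSeries.derivative (Polynomial R) (X * psi B 1) *
        psi B (-((n : Polynomial R) + 1))))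
      = coeff n P := by
  rw [coeff_substPS_mul constantCoeff_F]
  calc ∑ k ∈ range (n + 1), coeff k P *
        coeff n ((X * psi B 1) ^ k *
          (PowerSeries.derivative (Polynomial R) (X * psi B 1) *
            psi B (-((n : Polynomial R) + 1))))
      = ∑ k ∈ range (n + 1), (if k = n then coeff k P else 0) := by
        apply Finset.sum_congr rfl
        intro k hkm
        rw [coeff_term hB0 n k (by simp only [mem_range] at hkm; omega)]
        split <;> simp
    _ = coeff n P := by
        rw [Finset.sum_ite_eq' (range (n + 1)) n]
        simp

end Main

end StmtAux


open PowerSeries StmtAux in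
/-- With `p_k` defined by `Σ_k p_k(X)·tᵏ/k! = exp(X·B(t))`, with `W_B` the
unique series with `W_B(t·exp(B(t))) = t`, and with `q_0 = 1` and, for `k ≥ 1`, `q_k`
the unique polynomial with `(X − k)·q_k(X) = X·p_k(X − k)`, one has
`Σ_k q_k(X)·tᵏ/k! = exp(X·B(W_B(t)))` in `(R[X])[[t]]`. -/
theorem stmt_6 (R : Type*) [CommRing R] [Algebra ℚ R]
    (B : PowerSeries R) (hB0 : PowerSeries.constantCoeff (R := R) B = 0)
    (p : ℕ → Polynomial R)
    (hp : ∀ k : ℕ,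
      PowerSeries.coeff (R := Polynomial R) k
        (substPS
          (PowerSeries.C (R := Polynomial R) Polynomial.X * PowerSeries.map Polynomial.C B)
          (PowerSeries.exp (Polynomial R)))
      = (k.factorial : ℚ)⁻¹ • p k)
    (W : PowerSeries R) (hW0 : PowerSeries.constantCoeff (R := R) W = 0)
    (hW : substPS (PowerSeries.X * substPS B (PowerSeries.exp R)) W = PowerSeries.X)
    (q : ℕ → Polynomial R) (hq0 : q 0 = 1)
    (hq : ∀ k : ℕ, 1 ≤ k →
      (Polynomial.X - Polynomial.C (k : R)) * q k =
        Polynomial.X * (p k).comp (Polynomial.X - Polynomial.C (k : R))) :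
    ∀ k : ℕ,
      PowerSeries.coeff (R := Polynomial R) k
        (substPS
          (PowerSeries.C (R := Polynomial R) Polynomial.X *
            PowerSeries.map Polynomial.C (substPS W B))
          (PowerSeries.exp (Polynomial R)))
      = (k.factorial : ℚ)⁻¹ • q k := by
  classical
  have hsub : ∀ (u v : Polynomial R) (k : ℕ),
      (Polynomial.X - Polynomial.C (k : R)) * u = (Polynomial.X - Polynomial.C (k : R)) * v
        → u = v := by
    intro u v k h
    have h0 : (Polynomial.X - Polynomial.C (k : R)) * (u - v) = 0 := by
      rw [mul_sub, h, sub_self]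
    exact sub_eq_zero.mp
      (((Polynomial.monic_X_sub_C ((k : R))).mul_right_eq_zero_iff).mp h0)
  intro n
  have hWB0 : PowerSeries.constantCoeff (substPS W B) = 0 := by
    rw [constantCoeff_substPS hW0, hB0]
  have hTWB0 : constantCoeff
      (PowerSeries.map (Polynomial.C) (substPS W B)) = 0 := by
    rw [← coeff_zero_eq_constantCoeff_apply, PowerSeries.coeff_map,
      coeff_zero_eq_constantCoeff_apply, hWB0, map_zero]
  have hTW0 : constantCoeff (PowerSeries.map (Polynomial.C) W) = 0 := by
    rw [← coeff_zero_eq_constantCoeff_apply, PowerSeries.coeff_map,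
      coeff_zero_eq_constantCoeff_apply, hW0, map_zero]
  have hcA0 : constantCoeff
      (PowerSeries.C Polynomial.X *
        PowerSeries.map Polynomial.C (substPS W B)) = 0 := by
    rw [map_mul, constantCoeff_C, hTWB0, mul_zero]
  have hcX0 : constantCoeff
      (PowerSeries.C Polynomial.X *
        PowerSeries.map Polynomial.C B) = 0 := constantCoeff_cTB hB0 _
  set G := substPS (PowerSeries.C Polynomial.X *
      PowerSeries.map Polynomial.C (substPS W B)) (PowerSeries.exp (Polynomial R)) with hGdef
  -- Step 1 : composing with F = X·exp(B) recovers exp(X·B)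
  have hmapW : substPS (X * psi B 1) (PowerSeries.map (Polynomial.C) W) = X := by
    have h0 : PowerSeries.constantCoeff (X * substPS B (PowerSeries.exp R)) = 0 := by
      rw [map_mul, constantCoeff_X, zero_mul]
    have hcong := congrArg (PowerSeries.map (Polynomial.C : R →+* Polynomial R)) hW
    rw [map_substPS _ h0, PowerSeries.map_X] at hcong
    have hFmap : PowerSeries.map (Polynomial.C : R →+* Polynomial R)
        (X * substPS B (PowerSeries.exp R)) = X * psi B 1 := by
      rw [map_mul, PowerSeries.map_X, map_substPS _ hB0, PowerSeries.map_exp, ← psi_one_eq hB0]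
    rw [hFmap] at hcong
    exact hcong
  have hGF : substPS (X * psi B 1) G = psi B Polynomial.X := by
    rw [hGdef, substPS_assoc constantCoeff_F hcA0]
    have harg : substPS (X * psi B 1)
        (PowerSeries.C Polynomial.X *
          PowerSeries.map Polynomial.C (substPS W B))
        = PowerSeries.C Polynomial.X * PowerSeries.map Polynomial.C B := by
      rw [substPS_C_mul constantCoeff_F, map_substPS _ hW0,
        substPS_assoc constantCoeff_F hTW0, hmapW, substPS_X_left]
    rw [harg, ← psi_def]
  have hpsiX : ∀ k, coeff k (psi B Polynomial.X) = (k.factorial : ℚ)⁻¹ • p k :=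
    hp
  rcases Nat.eq_zero_or_pos n with hn0 | hn1
  · subst hn0
    have hG1 : coeff 0 G = 1 := by
      rw [coeff_zero_eq_constantCoeff_apply, hGdef, constantCoeff_substPS hcA0,
        PowerSeries.constantCoeff_exp]
    rw [hG1, hq0]
    simp
  -- n ≥ 1
  obtain ⟨n', rfl⟩ : ∃ n', n = n' + 1 := ⟨n - 1, by omega⟩
  set n := n' + 1 with hn
  set w : Polynomial R := Polynomial.X - ((n : ℕ) : Polynomial R) with hw
  -- transport of hp along x ↦ x - n
  have hpsiShift : coeff n (psi B w)
      = (n.factorial : ℚ)⁻¹ • ((p n).comp (Polynomial.X - Polynomial.C (n : R))) := by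
    set φ : Polynomial R →+* Polynomial R :=
      ((Polynomial.aeval (Polynomial.X - Polynomial.C (n : R)) :
        Polynomial R →ₐ[R] Polynomial R) : Polynomial R →+* Polynomial R) with hφ
    have hφC : ∀ r : R, φ (Polynomial.C r) = Polynomial.C r := by
      intro r
      simp [hφ]
    have hmapArg : PowerSeries.map φ
        (PowerSeries.C Polynomial.X * PowerSeries.map Polynomial.C B)
        = PowerSeries.C w * PowerSeries.map Polynomial.C B := by
      have h1 : φ Polynomial.X = w := by
        rw [hφ, hw]
        simp [Polynomial.C_eq_natCast]
      have h2 : PowerSeries.map φ (PowerSeries.map Polynomial.C B)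
          = PowerSeries.map Polynomial.C B := by
        apply PowerSeries.ext
        intro j
        simp only [PowerSeries.coeff_map]
        exact hφC _
      rw [map_mul, PowerSeries.map_C, h1, h2]
    have hmap : PowerSeries.map φ (psi B Polynomial.X) = psi B w := by
      rw [psi_def, psi_def, map_substPS _ hcX0, PowerSeries.map_exp, hmapArg]
    have hrat : ∀ (r : ℚ) (u : Polynomial R), φ (r • u) = r • φ u := by
      intro r u
      rw [Algebra.smul_def, Algebra.smul_def, map_mul]
      congr 1
      exact DFunLike.congr_fun (RingHom.ext_rat (φ.comp (algebraMap ℚ (Polynomial R)))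
        (algebraMap ℚ (Polynomial R))) r
    calc coeff n (psi B w)
        = φ (coeff n (psi B Polynomial.X)) := by
          rw [← hmap, PowerSeries.coeff_map]
      _ = φ ((n.factorial : ℚ)⁻¹ • p n) := by rw [hpsiX n]
      _ = (n.factorial : ℚ)⁻¹ • φ (p n) := hrat _ _
      _ = (n.factorial : ℚ)⁻¹ • ((p n).comp (Polynomial.X - Polynomial.C (n : R))) := by
          rw [hφ, Polynomial.comp_eq_aeval]
          rfl
  -- the key Lagrange-style computation
  set DB := PowerSeries.derivative (Polynomial R) (PowerSeries.map (Polynomial.C) B) with hDB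
  set c1 := coeff n (psi B w) with hc1
  set c2 := coeff n' (DB * psi B w) with hc2
  have key : coeff n G = c1 + c2 := by
    have k1 := keyL hB0 n G
    rw [hGF] at k1
    have k2 := expandF hB0 (Polynomial.X) (-((n : Polynomial R) + 1))
    have hXw : Polynomial.X + 1 + -((n : Polynomial R) + 1) = w := by
      rw [hw]; ring
    rw [hXw, ← hDB] at k2
    rw [k2, map_add, PowerSeries.coeff_succ_X_mul] at k1
    exact k1.symm
  have hder1 : coeff n'
      (PowerSeries.derivative (Polynomial R) (psi B w)) = c1 * ((n : ℕ) : Polynomial R) := by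
    rw [PowerSeries.coeff_derivative, ← hc1, hn]
    push_cast
    ring
  have hder2 : coeff n'
      (PowerSeries.derivative (Polynomial R) (psi B w)) = w * c2 := by
    rw [psi_deriv hB0, ← hDB, coeff_C_mul, ← hc2]
  have hrel : w * c2 = c1 * ((n : ℕ) : Polynomial R) := hder2.symm.trans hder1
  -- conclude by cancellation of the monic factor (X - n)
  apply hsub _ _ n
  have hCn : Polynomial.X - Polynomial.C ((n : ℕ) : R) = w := by
    rw [hw, Polynomial.C_eq_natCast]
  have lhs : w * (c1 + c2) = Polynomial.X * c1 := by
    have hw2 : w = Polynomial.X - ((n : ℕ) : Polynomial R) := hw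
    linear_combination hrel + c1 * hw2
  have lhs' : (Polynomial.X - Polynomial.C ((n : ℕ) : R)) * (c1 + c2) = Polynomial.X * c1 := by
    rw [hCn]; exact lhs
  rw [key, lhs', mul_smul_comm, hq n (by rw [hn]; omega), ← mul_smul_comm, ← hpsiShift]
end

section
/- Let V be a finite set, n ≥ 1, and f : V → Fin n a surjective map, with fibers L_i = f⁻¹(i). A perfect matching of a finite set S is a fixed-point-free involution π : S → S (π∘π = id and π(v) ≠ v for all v). Say two elements l, l' of S are linked by π if f(l) = f(l') or π(l) = l', and say π connects the family of fibers it meets if the equivalence relation generated by linking relates any two elements of S. Then the following map is a bijection: from the set of pairs (𝔉, (π_I)_{I∈𝔉}), where 𝔉 is a partition of Fin n into nonempty blocks and, for each block I ∈ 𝔉, π_I is a perfect matching of f⁻¹(I) = ⋃_{i∈I} L_i that connects the family (L_i)_{i∈I}, to the set of perfect matchings of V, sending (𝔉, (π_I)) to the common extension of the π_I. Equivalently: every perfect matching π of V arises from a unique such pair, namely 𝔉 is the partition of Fin n into the connected components of the graph on Fin n in which i and j are adjacent iff i ≠ j and there exists v ∈ V with f(v) = i and f(π(v)) = j, and π_I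 is the restriction of π to f⁻¹(I), which is well defined and connects (L_i)_{i∈I}. -/
/-- Let `f : V → Fin n` be surjective (`V` finite, `n ≥ 1`) and let `π` be
a perfect matching of `V` (a fixed-point-free involution).  Two elements are *linked*
if they lie in the same fiber of `f` or are matched by `π`.  A pair `(𝔉, (π_I)_{I∈𝔉})`
— a partition `𝔉` of `Fin n` together with, for each block `I`, a perfect matching of
`f⁻¹(I)` connecting the family of fibers `(L_i)_{i∈I}` — whose common extension is `π`
is encoded by the setoid `s` on `Fin n` whose classes are the blocks: the conditions
read (i) `π` maps each `f⁻¹(class)` to itself, and (ii) for each class, any two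
elements of its preimage are related by the equivalence relation generated by linking.
The claim is that every perfect matching `π` arises from exactly one such pair: the
setoid generated by the adjacency relation `i ~ j ↔ i ≠ j ∧ ∃ v, f v = i ∧ f (π v) = j`
satisfies (i) and (ii), and it is the unique setoid doing so. -/
theorem stmt_8 {V : Type*} [Fintype V] (n : ℕ) (hn : 1 ≤ n)
    (f : V → Fin n) (hf : Function.Surjective f)
    (π : V → V) (hinv : ∀ v, π (π v) = v) (hfree : ∀ v, π v ≠ v) :
    (∃! s : Setoid (Fin n),
      (∀ v : V, s.r (f v) (f (π v))) ∧
      (∀ i : Fin n, ∀ l l' : {v : V // s.r (f v) i},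
        Relation.EqvGen
          (fun x y : {v : V // s.r (f v) i} => f x.1 = f y.1 ∨ π x.1 = y.1) l l')) ∧
    (let s₀ : Setoid (Fin n) :=
      Relation.EqvGen.setoid fun i j => i ≠ j ∧ ∃ v : V, f v = i ∧ f (π v) = j
     (∀ v : V, s₀.r (f v) (f (π v))) ∧
      (∀ i : Fin n, ∀ l l' : {v : V // s₀.r (f v) i},
        Relation.EqvGen
          (fun x y : {v : V // s₀.r (f v) i} => f x.1 = f y.1 ∨ π x.1 = y.1) l l')) := by
  classical
  set r₀ : Fin n → Fin n → Prop :=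
    fun i j => i ≠ j ∧ ∃ v : V, f v = i ∧ f (π v) = j with hr₀
  -- the link relation on V
  set L : V → V → Prop := fun x y => f x = f y ∨ π x = y with hL
  -- (i) for the generated setoid
  have hstep : ∀ v : V, Relation.EqvGen r₀ (f v) (f (π v)) := by
    intro v
    by_cases h : f v = f (π v)
    · exact h ▸ Relation.EqvGen.refl _
    · exact Relation.EqvGen.rel _ _ ⟨h, v, rfl, rfl⟩
  -- a link chain yields an r₀-equivalence of f-values
  have hB : ∀ x y : V, Relation.EqvGen L x y → Relation.EqvGen r₀ (f x) (f y) := by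
    intro x y h
    induction h with
    | rel a b hab =>
      rcases hab with h | h
      · exact h ▸ Relation.EqvGen.refl _
      · exact h ▸ hstep a
    | refl a => exact Relation.EqvGen.refl _
    | symm a b _ ih => exact Relation.EqvGen.symm _ _ ih
    | trans a b c _ _ ih1 ih2 => exact Relation.EqvGen.trans _ _ _ ih1 ih2
  -- conversely, r₀-equivalent fibers are link-connected
  have hC : ∀ i j : Fin n, Relation.EqvGen r₀ i j →
      ∀ l l' : V, f l = i → f l' = j → Relation.EqvGen L l l' := by
    intro i j h
    induction h with
    | rel a b hab =>
      intro l l' hl hl'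
      obtain ⟨hne, v, hv1, hv2⟩ := hab
      have h1 : Relation.EqvGen L l v :=
        Relation.EqvGen.rel _ _ (Or.inl (by rw [hl, hv1]))
      have h2 : Relation.EqvGen L v (π v) := Relation.EqvGen.rel _ _ (Or.inr rfl)
      have h3 : Relation.EqvGen L (π v) l' :=
        Relation.EqvGen.rel _ _ (Or.inl (by rw [hv2, hl']))
      exact Relation.EqvGen.trans _ _ _ (Relation.EqvGen.trans _ _ _ h1 h2) h3
    | refl a =>
      intro l l' hl hl'
      exact Relation.EqvGen.rel _ _ (Or.inl (hl.trans hl'.symm))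
    | symm a b _ ih =>
      intro l l' hl hl'
      exact Relation.EqvGen.symm _ _ (ih l' l hl' hl)
    | trans a b c _ _ ih1 ih2 =>
      intro l l' hl hl'
      obtain ⟨m, hm⟩ := hf b
      exact Relation.EqvGen.trans _ _ _ (ih1 l m hl hm) (ih2 m l' hm hl')
  -- lift a link chain into the subtype of a class
  have hD : ∀ (i : Fin n) (x y : V), Relation.EqvGen L x y →
      ∀ (hx : Relation.EqvGen r₀ (f x) i) (hy : Relation.EqvGen r₀ (f y) i),
      Relation.EqvGen
        (fun a b : {v : V // Relation.EqvGen r₀ (f v) i} =>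
          f a.1 = f b.1 ∨ π a.1 = b.1) ⟨x, hx⟩ ⟨y, hy⟩ := by
    intro i x y h
    induction h with
    | rel a b hab => intro hx hy; exact Relation.EqvGen.rel _ _ hab
    | refl a => intro hx hy; exact Relation.EqvGen.refl _
    | symm a b hab ih => intro hx hy; exact Relation.EqvGen.symm _ _ (ih hy hx)
    | trans a b c hab hbc ih1 ih2 =>
      intro hx hy
      have hb : Relation.EqvGen r₀ (f b) i :=
        Relation.EqvGen.trans _ _ _ (Relation.EqvGen.symm _ _ (hB a b hab)) hx
      exact Relation.EqvGen.trans _ _ _ (ih1 hx hb) (ih2 hb hy)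
  -- property (ii) for s₀
  have hii : ∀ i : Fin n, ∀ l l' : {v : V // Relation.EqvGen r₀ (f v) i},
      Relation.EqvGen
        (fun x y : {v : V // Relation.EqvGen r₀ (f v) i} =>
          f x.1 = f y.1 ∨ π x.1 = y.1) l l' := by
    rintro i ⟨l, hl⟩ ⟨l', hl'⟩
    have h1 : Relation.EqvGen r₀ (f l) (f l') :=
      Relation.EqvGen.trans _ _ _ hl (Relation.EqvGen.symm _ _ hl')
    exact hD i l l' (hC _ _ h1 l l' rfl rfl) hl hl'
  -- projection of a subtype link chain to V
  have hproj : ∀ (s : Setoid (Fin n)) (i : Fin n) (x y : {v : V // s.r (f v) i}),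
      Relation.EqvGen
        (fun a b : {v : V // s.r (f v) i} => f a.1 = f b.1 ∨ π a.1 = b.1) x y →
      Relation.EqvGen L x.1 y.1 := by
    intro s i x y h
    induction h with
    | rel a b hab => exact Relation.EqvGen.rel _ _ hab
    | refl a => exact Relation.EqvGen.refl _
    | symm a b _ ih => exact Relation.EqvGen.symm _ _ ih
    | trans a b c _ _ ih1 ih2 => exact Relation.EqvGen.trans _ _ _ ih1 ih2
  refine ⟨⟨Relation.EqvGen.setoid r₀, ⟨hstep, hii⟩, ?_⟩, hstep, hii⟩
  -- uniqueness
  rintro s ⟨h1, h2⟩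
  apply Setoid.ext
  intro i j
  constructor
  · -- s.r i j → s₀.r i j
    intro hij
    obtain ⟨l, hl⟩ := hf i
    obtain ⟨l', hl'⟩ := hf j
    have hml : s.r (f l) i := hl ▸ s.iseqv.refl i
    have hml' : s.r (f l') i := by
      rw [hl']; exact s.iseqv.symm hij
    have := hproj s i ⟨l, hml⟩ ⟨l', hml'⟩ (h2 i ⟨l, hml⟩ ⟨l', hml'⟩)
    have := hB l l' this
    rw [hl, hl'] at this
    exact this
  · -- s₀.r i j → s.r i j
    intro hij
    induction hij with
    | rel a b hab =>
      obtain ⟨hne, v, hv1, hv2⟩ := hab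
      exact hv1 ▸ hv2 ▸ h1 v
    | refl a => exact s.iseqv.refl a
    | symm a b _ ih => exact s.iseqv.symm ih
    | trans a b c _ _ ih1 ih2 => exact s.iseqv.trans ih1 ih2
end
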